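/- Let q be an irrational real number, let λ ∈ ℝ, and let P ≠ 0 be a real polynomial in two groups of variables Y₁,…,Y_m and Z₁,…,Z_n (an element of MvPolynomial (Fin m ⊕ Fin n) ℝ, with Y-variables indexed by the left summand and Z-variables by the right summand). Suppose that, as an identity of polynomials, Σ_{k=1}^{m} Y_k·(∂P/∂Y_k) + q·Σ_{l=1}^{n} Z_l·(∂P/∂Z_l) = λ·P. Then there exist natural numbers i and j with λ = i + q·j, and P is bihomogeneous of bidegree (i, j): every monomial occurring in P (every element of the support of P) has total degree i in the Y-variables and total degree j in the Z-variables. -/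

import Mathlib

open MvPolynomial

lemma coeff_X_mul_pderiv {σ : Type*} [DecidableEq σ] (i : σ) (P : MvPolynomial σ ℝ)
    (d : σ →₀ ℕ) : coeff d (X i * pderiv i P) = (d i : ℝ) * coeff d P := by
  induction P using MvPolynomial.induction_on' with
  | monomial s a =>
    rw [pderiv_monomial]
    rcases Nat.eq_zero_or_pos (s i) with h | h
    · simp only [h, Nat.cast_zero, mul_zero, map_zero]
      rw [coeff_zero, coeff_monomial]
      split_ifs with hsd
      · subst hsd; simp [h]
      · ring
    · rw [X, monomial_mul, coeff_monomial, coeff_monomial]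
      have hs : Finsupp.single i 1 + (s - Finsupp.single i 1) = s := by
        ext j
        rcases eq_or_ne j i with rfl | hj
        · simp [Finsupp.single_eq_same]; omega
        · simp [Finsupp.single_eq_of_ne' (Ne.symm hj)]
      rw [hs]
      split_ifs with hsd
      · subst hsd; ring
      · ring
  | add p q hp hq =>
    rw [map_add, mul_add, coeff_add, coeff_add, hp, hq, mul_add]

lemma irr_unique {q : ℝ} (hq : Irrational q) {a b a' b' : ℕ}
    (h : (a : ℝ) + q * b = (a' : ℝ) + q * b') : a = a' ∧ b = b' := by
  have hb : b = b' := by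
    by_contra hbb
    have hne : ((b' : ℝ)) - b ≠ 0 := by
      intro h0
      exact hbb (by exact_mod_cast (sub_eq_zero.mp h0).symm)
    have hx : q = ((a : ℝ) - a') / ((b' : ℝ) - b) := by
      field_simp
      linarith
    refine hq ⟨((a : ℚ) - a') / ((b' : ℚ) - b), ?_⟩
    rw [hx]; push_cast; ring
  subst hb
  constructor
  · have : (a : ℝ) = a' := by linarith
    exact_mod_cast this
  · rfl

/-- If a nonzero real polynomial `P` in variables `Y₁,…,Y_m, Z₁,…,Z_n` satisfies the
Euler-type identity `Σ Y_k ∂P/∂Y_k + q Σ Z_l ∂P/∂Z_l = λ P` with `q` irrational, then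
`λ = i + q·j` for natural numbers `i, j` and `P` is bihomogeneous of bidegree `(i, j)`. -/
theorem euler_identity_implies_bihomogeneous (m n : ℕ) (q lam : ℝ) (hq : Irrational q)
    (P : MvPolynomial (Fin m ⊕ Fin n) ℝ) (hP : P ≠ 0)
    (heuler :
      (∑ k : Fin m, X (Sum.inl k) * pderiv (Sum.inl k) P)
        + C q * (∑ l : Fin n, X (Sum.inr l) * pderiv (Sum.inr l) P) = C lam * P) :
    ∃ i j : ℕ, lam = (i : ℝ) + q * (j : ℝ) ∧
      ∀ d ∈ P.support,
        (∑ k : Fin m, d (Sum.inl k)) = i ∧ (∑ l : Fin n, d (Sum.inr l)) = j := by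
  have key : ∀ d ∈ P.support,
      ((∑ k : Fin m, d (Sum.inl k) : ℕ) : ℝ) + q * ((∑ l : Fin n, d (Sum.inr l) : ℕ) : ℝ)
        = lam := by
    intro d hd
    have hc : coeff d P ≠ 0 := mem_support_iff.mp hd
    have h := congrArg (coeff d) heuler
    simp only [coeff_add, coeff_C_mul, coeff_sum, coeff_X_mul_pderiv] at h
    rw [← Finset.sum_mul, ← Finset.sum_mul] at h
    push_cast
    have h' : ((∑ k : Fin m, (d (Sum.inl k) : ℝ))
        + q * (∑ l : Fin n, (d (Sum.inr l) : ℝ))) * coeff d P = lam * coeff d P := by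
      rw [add_mul]; rw [mul_assoc]; linarith [h]
    have := mul_right_cancel₀ hc h'
    linarith [this]
  obtain ⟨d0, hd0⟩ := (support_nonempty.mpr hP)
  refine ⟨∑ k : Fin m, d0 (Sum.inl k), ∑ l : Fin n, d0 (Sum.inr l), (key d0 hd0).symm, ?_⟩
  intro d hd
  have h1 := key d hd
  have h2 := key d0 hd0
  exact irr_unique hq (h1.trans h2.symm)
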